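/- For every λ > 0 such that F(λ) ≥ j₀, the effective dimension satisfies 𝒩(λ) ≤ F(λ)·(1 + 2(1 − 2^{1−ν*})^{−1}). In particular, under (eigup) there is a constant C depending only on ν* such that 𝒩(λ) ≤ C·F(λ) for all sufficiently small λ. -/

import Mathlib

/-- `F μ t` is the number of indices `j ≥ 1` with `μ j ≥ t`. -/
noncomputable def F (μ : ℕ → ℝ) (t : ℝ) : ℕ :=
  {j : ℕ | 1 ≤ j ∧ t ≤ μ j}.ncard

/-- The effective dimension `𝒩(λ) = Σ_{j≥1} μ_j / (μ_j + λ)`. -/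
noncomputable def Neff (μ : ℕ → ℝ) (lam : ℝ) : ℝ :=
  ∑' j : ℕ, μ (j + 1) / (μ (j + 1) + lam)

private lemma anti_le' {μ : ℕ → ℝ} (hanti : ∀ j, 1 ≤ j → μ (j + 1) ≤ μ j) :
    ∀ a b : ℕ, 1 ≤ a → a ≤ b → μ b ≤ μ a := by
  intro a b ha hab
  induction b, hab using Nat.le_induction with
  | base => exact le_rfl
  | succ b hb ih => exact (hanti b (ha.trans hb)).trans ih

private lemma iter_eigup' {μ : ℕ → ℝ} {ν : ℝ} {j₀ : ℕ}
    (heigup : ∀ j, 1 ≤ j → j₀ ≤ j → μ (2 * j) ≤ (2 : ℝ) ^ (-ν) * μ j)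
    (hq0 : (0:ℝ) ≤ (2:ℝ) ^ (-ν)) :
    ∀ (k m : ℕ), 1 ≤ m → j₀ ≤ m → μ (2 ^ k * m) ≤ ((2:ℝ) ^ (-ν)) ^ k * μ m := by
  intro k
  induction k with
  | zero => intro m h1 h2; simp
  | succ k ih =>
    intro m h1 h2
    have hpos : 0 < 2 ^ k * m := Nat.mul_pos (pow_pos (by norm_num) k) h1
    have hk1 : 1 ≤ 2 ^ k * m := hpos
    have hk0 : j₀ ≤ 2 ^ k * m := le_trans h2 (Nat.le_mul_of_pos_left m (pow_pos (by norm_num) k))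
    have heq : 2 ^ (k + 1) * m = 2 * (2 ^ k * m) := by ring
    rw [heq]
    calc μ (2 * (2 ^ k * m)) ≤ (2:ℝ) ^ (-ν) * μ (2 ^ k * m) := heigup _ hk1 hk0
      _ ≤ (2:ℝ) ^ (-ν) * (((2:ℝ) ^ (-ν)) ^ k * μ m) :=
          mul_le_mul_of_nonneg_left (ih m h1 h2) hq0
      _ = ((2:ℝ) ^ (-ν)) ^ (k + 1) * μ m := by ring

private lemma S_finite' {μ : ℕ → ℝ} (hlim : Filter.Tendsto μ Filter.atTop (nhds 0))
    {lam : ℝ} (hlam : 0 < lam) : {j : ℕ | 1 ≤ j ∧ lam ≤ μ j}.Finite := by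
  have h : ∀ᶠ j in Filter.atTop, μ j < lam := hlim.eventually (eventually_lt_nhds hlam)
  obtain ⟨N, hN⟩ := Filter.eventually_atTop.mp h
  apply Set.Finite.subset (Set.finite_Iio N)
  intro j hj
  by_contra hcon
  simp only [Set.mem_Iio, not_lt] at hcon
  exact absurd (hN j hcon) (not_lt.mpr hj.2)

private lemma le_F' {μ : ℕ → ℝ} (hanti : ∀ j, 1 ≤ j → μ (j + 1) ≤ μ j)
    (hlim : Filter.Tendsto μ Filter.atTop (nhds 0)) {lam : ℝ} (hlam : 0 < lam)
    {m : ℕ} (hm1 : 1 ≤ m) (hm : lam ≤ μ m) : m ≤ F μ lam := by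
  have hsub : (Finset.Icc 1 m : Set ℕ) ⊆ {j : ℕ | 1 ≤ j ∧ lam ≤ μ j} := by
    intro j hj
    simp only [Finset.coe_Icc, Set.mem_Icc] at hj
    exact ⟨hj.1, hm.trans (anti_le' hanti j m hj.1 hj.2)⟩
  have h1 := Set.ncard_le_ncard hsub (S_finite' hlim hlam)
  rwa [Set.ncard_coe_finset, Nat.card_Icc, Nat.add_sub_cancel] at h1

/-- under (eigup) with `ν* > 1`, for every `λ > 0` with `F(λ) ≥ j₀`
one has `𝒩(λ) ≤ F(λ)(1 + 2(1 - 2^(1-ν*))⁻¹)`; in particular there is a constant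
`C` (depending only on `ν*`) with `𝒩(λ) ≤ C F(λ)` for all sufficiently small `λ`. -/
theorem stmt8 (μ : ℕ → ℝ)
    (hpos : ∀ j, 1 ≤ j → 0 < μ j)
    (hanti : ∀ j, 1 ≤ j → μ (j + 1) ≤ μ j)
    (hlim : Filter.Tendsto μ Filter.atTop (nhds 0))
    (ν : ℝ) (hν : 1 < ν) (j₀ : ℕ) (hj₀ : 1 ≤ j₀)
    (heigup : ∀ j, 1 ≤ j → j₀ ≤ j → μ (2 * j) ≤ (2 : ℝ) ^ (-ν) * μ j) :
    (∀ lam : ℝ, 0 < lam → j₀ ≤ F μ lam →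
      Neff μ lam ≤ (F μ lam : ℝ) * (1 + 2 * (1 - (2 : ℝ) ^ (1 - ν))⁻¹)) ∧
    ∃ C : ℝ, 0 < C ∧ ∃ lam₀ : ℝ, 0 < lam₀ ∧
      ∀ lam : ℝ, 0 < lam → lam ≤ lam₀ → Neff μ lam ≤ C * (F μ lam : ℝ) := by
  have hr0 : (0:ℝ) < (2:ℝ) ^ (1 - ν) := Real.rpow_pos_of_pos (by norm_num) _
  have hr1 : (2:ℝ) ^ (1 - ν) < 1 :=
    Real.rpow_lt_one_of_one_lt_of_neg (by norm_num) (by linarith)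
  set r : ℝ := (2:ℝ) ^ (1 - ν) with hrdef
  have hc0 : (0:ℝ) < (1 - r)⁻¹ := inv_pos.mpr (by linarith)
  have hq0 : (0:ℝ) ≤ (2:ℝ) ^ (-ν) := (Real.rpow_pos_of_pos (by norm_num) _).le
  have hrq : r = 2 * (2:ℝ) ^ (-ν) := by
    rw [hrdef, show (1:ℝ) - ν = 1 + (-ν) by ring, Real.rpow_add (by norm_num), Real.rpow_one]
  have hgeom : ∀ K : ℕ, ∑ k ∈ Finset.range K, r ^ k ≤ (1 - r)⁻¹ := by
    intro K
    have h1 : ∑ k ∈ Finset.range K, r ^ k = (1 - r ^ K) / (1 - r) := by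
      rw [geom_sum_eq hr1.ne K]
      rw [← neg_div_neg_eq]
      ring_nf
    rw [h1, ← one_div]
    exact div_le_div_of_nonneg_right (by linarith [pow_nonneg hr0.le K]) (by linarith)
  have main : ∀ lam : ℝ, 0 < lam → j₀ ≤ F μ lam →
      Neff μ lam ≤ (F μ lam : ℝ) * (1 + 2 * (1 - (2 : ℝ) ^ (1 - ν))⁻¹) := by
    intro lam hlam hF
    set n := F μ lam with hn
    have hn1 : 1 ≤ n := hj₀.trans hF
    have hμn1pos : 0 < μ (n + 1) := hpos (n + 1) (by omega)
    have hμn1 : μ (n + 1) ≤ lam := by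
      by_contra h
      push_neg at h
      have h2 : n + 1 ≤ n := by rw [hn]; exact le_F' hanti hlim hlam (m := n + 1) (Nat.succ_le_succ (Nat.zero_le n)) h.le
      exact Nat.not_succ_le_self n h2
    -- block bound
    have hblock : ∀ K : ℕ, ∑ i ∈ Finset.Ico (2 ^ K * (n + 1)) (2 ^ (K + 1) * (n + 1)), μ i
        ≤ ((n:ℝ) + 1) * μ (n + 1) * r ^ K := by
      intro K
      have hcardIco : (Finset.Ico (2 ^ K * (n + 1)) (2 ^ (K + 1) * (n + 1))).card
          = 2 ^ K * (n + 1) := by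
        rw [Nat.card_Ico]
        have : 2 ^ (K + 1) * (n + 1) = 2 ^ K * (n + 1) + 2 ^ K * (n + 1) := by ring
        omega
      have hterm : ∀ i ∈ Finset.Ico (2 ^ K * (n + 1)) (2 ^ (K + 1) * (n + 1)),
          μ i ≤ ((2:ℝ) ^ (-ν)) ^ K * μ (n + 1) := by
        intro i hi
        simp only [Finset.mem_Ico] at hi
        have h1 : 1 ≤ 2 ^ K * (n + 1) := Nat.mul_pos (pow_pos (by norm_num) K) (by omega)
        have h2 := anti_le' hanti (2 ^ K * (n + 1)) i h1 hi.1
        exact h2.trans (iter_eigup' heigup hq0 K (n + 1) (by omega) (by omega))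
      calc ∑ i ∈ Finset.Ico (2 ^ K * (n + 1)) (2 ^ (K + 1) * (n + 1)), μ i
          ≤ ∑ _i ∈ Finset.Ico (2 ^ K * (n + 1)) (2 ^ (K + 1) * (n + 1)),
              ((2:ℝ) ^ (-ν)) ^ K * μ (n + 1) := Finset.sum_le_sum hterm
        _ = ((2 ^ K * (n + 1) : ℕ) : ℝ) * (((2:ℝ) ^ (-ν)) ^ K * μ (n + 1)) := by
            rw [Finset.sum_const, hcardIco, nsmul_eq_mul]
        _ = ((n:ℝ) + 1) * μ (n + 1) * r ^ K := by
            push_cast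
            rw [hrq, mul_pow]
            ring
    have htail' : ∀ K : ℕ, ∑ i ∈ Finset.Ico (n + 1) (2 ^ K * (n + 1)), μ i
        ≤ ((n:ℝ) + 1) * μ (n + 1) * ∑ k ∈ Finset.range K, r ^ k := by
      intro K
      induction K with
      | zero => simp
      | succ K ih =>
        have hle1 : n + 1 ≤ 2 ^ K * (n + 1) :=
          Nat.le_mul_of_pos_left _ (pow_pos (by norm_num) K)
        have hle2 : 2 ^ K * (n + 1) ≤ 2 ^ (K + 1) * (n + 1) :=
          Nat.mul_le_mul_right _ (Nat.pow_le_pow_right (by norm_num) (by omega))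
        rw [← Finset.sum_Ico_consecutive _ hle1 hle2, Finset.sum_range_succ]
        calc ∑ i ∈ Finset.Ico (n + 1) (2 ^ K * (n + 1)), μ i
              + ∑ i ∈ Finset.Ico (2 ^ K * (n + 1)) (2 ^ (K + 1) * (n + 1)), μ i
            ≤ ((n:ℝ) + 1) * μ (n + 1) * ∑ k ∈ Finset.range K, r ^ k
              + ((n:ℝ) + 1) * μ (n + 1) * r ^ K := add_le_add ih (hblock K)
          _ = ((n:ℝ) + 1) * μ (n + 1) * (∑ k ∈ Finset.range K, r ^ k + r ^ K) := by ring
    have hXnn : (0:ℝ) ≤ ((n:ℝ) + 1) * μ (n + 1) := by positivity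
    have htailm : ∀ m : ℕ, ∑ i ∈ Finset.Ico (n + 1) m, μ i
        ≤ ((n:ℝ) + 1) * μ (n + 1) * (1 - r)⁻¹ := by
      intro m
      have hmono : Finset.Ico (n + 1) m ⊆ Finset.Ico (n + 1) (2 ^ m * (n + 1)) := by
        apply Finset.Ico_subset_Ico le_rfl
        calc m ≤ 2 ^ m := (Nat.lt_two_pow_self).le
          _ ≤ 2 ^ m * (n + 1) := Nat.le_mul_of_pos_right _ n.succ_pos
      have hnonneg : ∀ i ∈ Finset.Ico (n + 1) (2 ^ m * (n + 1)),
          i ∉ Finset.Ico (n + 1) m → 0 ≤ μ i := by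
        intro i hi _
        simp only [Finset.mem_Ico] at hi
        exact (hpos i (by omega)).le
      calc ∑ i ∈ Finset.Ico (n + 1) m, μ i
          ≤ ∑ i ∈ Finset.Ico (n + 1) (2 ^ m * (n + 1)), μ i :=
            Finset.sum_le_sum_of_subset_of_nonneg hmono hnonneg
        _ ≤ ((n:ℝ) + 1) * μ (n + 1) * ∑ k ∈ Finset.range m, r ^ k := htail' m
        _ ≤ ((n:ℝ) + 1) * μ (n + 1) * (1 - r)⁻¹ :=
            mul_le_mul_of_nonneg_left (hgeom m) hXnn
    have hμpos : ∀ j : ℕ, 0 < μ (j + 1) := fun j => hpos (j + 1) (by omega)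
    have hf0 : ∀ j : ℕ, 0 ≤ μ (j + 1) / (μ (j + 1) + lam) :=
      fun j => div_nonneg (hμpos j).le (by linarith [hμpos j])
    have hf1 : ∀ j : ℕ, μ (j + 1) / (μ (j + 1) + lam) ≤ 1 :=
      fun j => div_le_one_of_le₀ (by linarith) (by linarith [hμpos j])
    have hf2 : ∀ j : ℕ, μ (j + 1) / (μ (j + 1) + lam) ≤ μ (j + 1) / lam :=
      fun j => div_le_div_of_nonneg_left (hμpos j).le hlam (by linarith [hμpos j])
    have hpartial : ∀ m : ℕ, ∑ j ∈ Finset.range m, μ (j + 1) / (μ (j + 1) + lam)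
        ≤ (n:ℝ) * (1 + 2 * (1 - r)⁻¹) := by
      intro m
      set M := max m n with hM
      have h1 : ∑ j ∈ Finset.range m, μ (j + 1) / (μ (j + 1) + lam)
          ≤ ∑ j ∈ Finset.range M, μ (j + 1) / (μ (j + 1) + lam) :=
        Finset.sum_le_sum_of_subset_of_nonneg
          (Finset.range_subset_range.mpr (le_max_left m n)) (fun i _ _ => hf0 i)
      have hsplit : ∑ j ∈ Finset.range M, μ (j + 1) / (μ (j + 1) + lam)
          = ∑ j ∈ Finset.range n, μ (j + 1) / (μ (j + 1) + lam)
            + ∑ j ∈ Finset.Ico n M, μ (j + 1) / (μ (j + 1) + lam) := by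
        simp only [Finset.range_eq_Ico]
        rw [Finset.sum_Ico_consecutive _ (Nat.zero_le n) (le_max_right m n)]
      have hhead : ∑ j ∈ Finset.range n, μ (j + 1) / (μ (j + 1) + lam) ≤ (n:ℝ) := by
        calc ∑ j ∈ Finset.range n, μ (j + 1) / (μ (j + 1) + lam)
            ≤ ∑ _j ∈ Finset.range n, (1:ℝ) := Finset.sum_le_sum (fun j _ => hf1 j)
          _ = (n:ℝ) := by simp
      have hreindex : ∑ j ∈ Finset.Ico n M, μ (j + 1) / lam
          = ∑ i ∈ Finset.Ico (n + 1) (M + 1), μ i / lam := by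
        rw [Finset.sum_Ico_eq_sum_range, Finset.sum_Ico_eq_sum_range, Nat.succ_sub_succ]
        apply Finset.sum_congr rfl
        intro j _
        rw [show n + 1 + j = n + j + 1 from by omega]
      have htailf : ∑ j ∈ Finset.Ico n M, μ (j + 1) / (μ (j + 1) + lam)
          ≤ (n:ℝ) * (2 * (1 - r)⁻¹) := by
        calc ∑ j ∈ Finset.Ico n M, μ (j + 1) / (μ (j + 1) + lam)
            ≤ ∑ j ∈ Finset.Ico n M, μ (j + 1) / lam :=
              Finset.sum_le_sum (fun j _ => hf2 j)
          _ = (∑ i ∈ Finset.Ico (n + 1) (M + 1), μ i) / lam := by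
              rw [hreindex, Finset.sum_div]
          _ ≤ (((n:ℝ) + 1) * μ (n + 1) * (1 - r)⁻¹) / lam :=
              div_le_div_of_nonneg_right (htailm (M + 1)) hlam.le
          _ ≤ (((n:ℝ) + 1) * lam * (1 - r)⁻¹) / lam := by
              apply div_le_div_of_nonneg_right ?_ hlam.le
              have : (0:ℝ) ≤ ((n:ℝ) + 1) * (1 - r)⁻¹ := by positivity
              nlinarith
          _ = ((n:ℝ) + 1) * (1 - r)⁻¹ := by
              rw [mul_right_comm, mul_div_assoc, div_self hlam.ne', mul_one]
          _ ≤ (n:ℝ) * (2 * (1 - r)⁻¹) := by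
              have hcast : (1:ℝ) ≤ (n:ℝ) := by exact_mod_cast hn1
              nlinarith
      calc ∑ j ∈ Finset.range m, μ (j + 1) / (μ (j + 1) + lam)
          ≤ ∑ j ∈ Finset.range M, μ (j + 1) / (μ (j + 1) + lam) := h1
        _ = _ + _ := hsplit
        _ ≤ (n:ℝ) + (n:ℝ) * (2 * (1 - r)⁻¹) := add_le_add hhead htailf
        _ = (n:ℝ) * (1 + 2 * (1 - r)⁻¹) := by ring
    have := Real.tsum_le_of_sum_range_le hf0 hpartial
    exact this
  refine ⟨main, 1 + 2 * (1 - r)⁻¹, by linarith, μ j₀, hpos j₀ hj₀, ?_⟩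
  intro lam hlam hlam0
  have hF : j₀ ≤ F μ lam := le_F' hanti hlim hlam hj₀ hlam0
  have := main lam hlam hF
  linarith [this]
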